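/- Let f be the log partition function of a convex body K ⊆ R^n contained in a Euclidean ball of radius R and containing a ball of radius r, with Hessian Σ(θ), and let ϑ be the complexity parameter of the entropic barrier f* (so that ‖θ‖_θ² ≤ ϑ for all θ). Then for any θ with Euclidean norm ‖θ‖ ≤ 1/(4R), λ_min(Σ(θ)) ≥ (1/16)(r/(n+1))², and for ‖θ‖ > 1/(4R), λ_min(Σ(θ)) ≥ (1/64)(1/(4R‖θ‖))^{4√ϑ+2}(r/(n+1))². -/

import Mathlib

open MeasureTheory
open scoped RealInnerProductSpace

/-- The Boltzmann distribution on `K` with parameter `θ`. -/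
noncomputable def boltzmann {n : ℕ} (K : Set (EuclideanSpace ℝ (Fin n)))
    (θ : EuclideanSpace ℝ (Fin n)) : Measure (EuclideanSpace ℝ (Fin n)) :=
  let ν := (volume.restrict K).withDensity fun x => ENNReal.ofReal (Real.exp ⟪θ, x⟫)
  (ν Set.univ)⁻¹ • ν

/-- The mean of a measure on Euclidean space. -/
noncomputable def meanVec {n : ℕ} (μ : Measure (EuclideanSpace ℝ (Fin n))) :
    EuclideanSpace ℝ (Fin n) := ∫ x, x ∂μ

/-- The covariance bilinear form of a measure; for the Boltzmann distribution with
parameter `θ` this is the Hessian `Σ(θ)` of the log partition function. -/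
noncomputable def covForm {n : ℕ} (μ : Measure (EuclideanSpace ℝ (Fin n)))
    (v w : EuclideanSpace ℝ (Fin n)) : ℝ :=
  ∫ x, ⟪x - meanVec μ, v⟫ * ⟪x - meanVec μ, w⟫ ∂μ

/-- Local norm `‖v‖_θ = √(vᵀ Σ(θ) v)` for the log partition function of `K`. -/
noncomputable def lnorm {n : ℕ} (K : Set (EuclideanSpace ℝ (Fin n)))
    (θ v : EuclideanSpace ℝ (Fin n)) : ℝ :=
  Real.sqrt (covForm (boltzmann K θ) v v)

lemma covForm_self_nonneg {n : ℕ} (μ : Measure (EuclideanSpace ℝ (Fin n)))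
    (v : EuclideanSpace ℝ (Fin n)) : 0 ≤ covForm μ v v :=
  integral_nonneg fun _ => mul_self_nonneg _

lemma lnorm_nonneg {n : ℕ} (K : Set (EuclideanSpace ℝ (Fin n)))
    (θ v : EuclideanSpace ℝ (Fin n)) : 0 ≤ lnorm K θ v := Real.sqrt_nonneg _

lemma sq_lnorm {n : ℕ} (K : Set (EuclideanSpace ℝ (Fin n)))
    (θ v : EuclideanSpace ℝ (Fin n)) :
    (lnorm K θ v) ^ 2 = covForm (boltzmann K θ) v v :=
  Real.sq_sqrt (covForm_self_nonneg _ _)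

lemma covForm_smul {n : ℕ} (μ : Measure (EuclideanSpace ℝ (Fin n))) (t : ℝ)
    (v : EuclideanSpace ℝ (Fin n)) :
    covForm μ (t • v) (t • v) = t ^ 2 * covForm μ v v := by
  unfold covForm
  rw [← integral_const_mul]
  congr 1
  funext x
  rw [real_inner_smul_right]
  ring

lemma lnorm_smul {n : ℕ} (K : Set (EuclideanSpace ℝ (Fin n))) (t : ℝ)
    (θ v : EuclideanSpace ℝ (Fin n)) :
    lnorm K θ (t • v) = |t| * lnorm K θ v := by
  unfold lnorm
  rw [covForm_smul, Real.sqrt_mul (sq_nonneg t), Real.sqrt_sq_eq_abs]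

lemma four_le_rpow_aux (s : ℝ) (hs : 0 < s) :
    (4 : ℝ) ≤ (1 + 1 / (2 * s)) ^ ((4 : ℝ) * s + 2) := by
  set u : ℝ := 1 / (2 * s) with hu
  have hu0 : 0 < u := by positivity
  have hb : (1 : ℝ) < 1 + u := by linarith
  have hlog : 1 - (1 + u)⁻¹ ≤ Real.log (1 + u) := by
    have := Real.log_le_sub_one_of_pos (inv_pos.mpr (by linarith : (0:ℝ) < 1 + u))
    rw [Real.log_inv] at this; linarith
  have hkey : (2 : ℝ) ≤ ((4 : ℝ) * s + 2) * Real.log (1 + u) := by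
    have h1 : ((4 : ℝ) * s + 2) * (1 - (1 + u)⁻¹) = 2 := by
      have h2 : (4 : ℝ) * s + 2 = 2 * (1 + u) / u := by
        rw [hu]; field_simp; ring
      rw [h2]
      have : (1 : ℝ) - (1 + u)⁻¹ = u / (1 + u) := by
        field_simp
        ring
      rw [this]
      field_simp
    calc (2 : ℝ) = ((4 : ℝ) * s + 2) * (1 - (1 + u)⁻¹) := h1.symm
      _ ≤ ((4 : ℝ) * s + 2) * Real.log (1 + u) := by
          apply mul_le_mul_of_nonneg_left hlog (by linarith)
  have hexp2 : (4 : ℝ) ≤ Real.exp 2 := by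
    have h1 : (2 : ℝ) ≤ Real.exp 1 := by
      have := Real.add_one_le_exp (1 : ℝ); linarith
    calc (4 : ℝ) = 2 * 2 := by norm_num
      _ ≤ Real.exp 1 * Real.exp 1 := by nlinarith
      _ = Real.exp 2 := by rw [← Real.exp_add]; norm_num
  calc (4 : ℝ) ≤ Real.exp 2 := hexp2
    _ ≤ Real.exp (((4 : ℝ) * s + 2) * Real.log (1 + u)) := Real.exp_le_exp.mpr hkey
    _ = (1 + u) ^ ((4 : ℝ) * s + 2) := by
        rw [Real.rpow_def_of_pos (by linarith : (0:ℝ) < 1 + u), mul_comm]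

theorem stmt14 (n : ℕ) (r R ϑ : ℝ) (hr : 0 < r) (hrR : r ≤ R)
    (K : Set (EuclideanSpace ℝ (Fin n)))
    (hKconv : Convex ℝ K) (hKcomp : IsCompact K) (hKint : (interior K).Nonempty)
    (c c' : EuclideanSpace ℝ (Fin n))
    (hballin : Metric.closedBall c r ⊆ K) (hballout : K ⊆ Metric.closedBall c' R)
    -- `ϑ` is the complexity parameter of the entropic barrier: `‖θ‖_θ² ≤ ϑ` for all `θ`
    (hϑ : ∀ θ : EuclideanSpace ℝ (Fin n), (lnorm K θ θ) ^ 2 ≤ ϑ)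
    -- available facts: `λ_min(Σ(0)) ≥ (1/4)(r/(n+1))²`, `λ_max(Σ(θ)) ≤ 4R²`, and
    -- the self-concordance of the log partition function of `K`
    (hlam0 : ∀ v : EuclideanSpace ℝ (Fin n),
      (1 / 4) * (r / (n + 1)) ^ 2 * ‖v‖ ^ 2 ≤ covForm (boltzmann K 0) v v)
    (hlamax : ∀ θ v : EuclideanSpace ℝ (Fin n),
      covForm (boltzmann K θ) v v ≤ 4 * R ^ 2 * ‖v‖ ^ 2)
    (hsc : ∀ θ₀ θ₁ v : EuclideanSpace ℝ (Fin n), lnorm K θ₀ (θ₁ - θ₀) < 1 →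
      (1 - lnorm K θ₀ (θ₁ - θ₀)) * lnorm K θ₀ v ≤ lnorm K θ₁ v ∧
        lnorm K θ₁ v ≤ lnorm K θ₀ v / (1 - lnorm K θ₀ (θ₁ - θ₀))) :
    ∀ θ : EuclideanSpace ℝ (Fin n),
      (‖θ‖ ≤ 1 / (4 * R) →
        ∀ v, (1 / 16) * (r / (n + 1)) ^ 2 * ‖v‖ ^ 2 ≤ covForm (boltzmann K θ) v v) ∧
      (1 / (4 * R) < ‖θ‖ →
        ∀ v, (1 / 64) * (1 / (4 * R * ‖θ‖)) ^ ((4 : ℝ) * Real.sqrt ϑ + 2) *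
          (r / (n + 1)) ^ 2 * ‖v‖ ^ 2 ≤ covForm (boltzmann K θ) v v) := by
  have hR : 0 < R := lt_of_lt_of_le hr hrR
  set a : ℝ := r / ((n : ℝ) + 1) with ha
  have ha0 : 0 < a := div_pos hr (by positivity)
  -- lower bound on lnorm at 0
  have hL0 : ∀ v : EuclideanSpace ℝ (Fin n), (1 / 2) * a * ‖v‖ ≤ lnorm K 0 v := by
    intro v
    have h := hlam0 v
    have h2 : ((1 / 2) * a * ‖v‖) ^ 2 ≤ covForm (boltzmann K 0) v v := by
      calc ((1 / 2) * a * ‖v‖) ^ 2 = 1 / 4 * a ^ 2 * ‖v‖ ^ 2 := by ring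
        _ ≤ covForm (boltzmann K 0) v v := h
    calc (1 / 2) * a * ‖v‖ = Real.sqrt (((1 / 2) * a * ‖v‖) ^ 2) :=
          (Real.sqrt_sq (by positivity)).symm
      _ ≤ lnorm K 0 v := Real.sqrt_le_sqrt h2
  -- upper bound on lnorm
  have hLmax : ∀ θ v : EuclideanSpace ℝ (Fin n), lnorm K θ v ≤ 2 * R * ‖v‖ := by
    intro θ v
    have h := hlamax θ v
    calc lnorm K θ v ≤ Real.sqrt (4 * R ^ 2 * ‖v‖ ^ 2) := Real.sqrt_le_sqrt h
      _ = Real.sqrt ((2 * R * ‖v‖) ^ 2) := by ring_nf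
      _ = 2 * R * ‖v‖ := Real.sqrt_sq (by positivity)
  -- lnorm θ θ ≤ √ϑ
  have hLϑ : ∀ θ : EuclideanSpace ℝ (Fin n), lnorm K θ θ ≤ Real.sqrt ϑ := by
    intro θ
    have h := hϑ θ
    calc lnorm K θ θ = Real.sqrt ((lnorm K θ θ) ^ 2) :=
          (Real.sqrt_sq (lnorm_nonneg K θ θ)).symm
      _ ≤ Real.sqrt ϑ := Real.sqrt_le_sqrt h
  -- self-concordance step
  have step : ∀ θ₀ θ₁ : EuclideanSpace ℝ (Fin n), lnorm K θ₀ (θ₁ - θ₀) ≤ 1 / 2 →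
      ∀ v, (1 / 2) * lnorm K θ₀ v ≤ lnorm K θ₁ v := by
    intro θ₀ θ₁ h v
    have h1 : lnorm K θ₀ (θ₁ - θ₀) < 1 := lt_of_le_of_lt h (by norm_num)
    have h2 := (hsc θ₀ θ₁ v h1).1
    nlinarith [lnorm_nonneg K θ₀ v]
  -- base lemma
  have base : ∀ θ : EuclideanSpace ℝ (Fin n), ‖θ‖ ≤ 1 / (4 * R) →
      ∀ v, (1 / 4) * a * ‖v‖ ≤ lnorm K θ v := by
    intro θ hθ v
    have hsmall : lnorm K 0 (θ - 0) ≤ 1 / 2 := by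
      rw [sub_zero]
      calc lnorm K 0 θ ≤ 2 * R * ‖θ‖ := hLmax 0 θ
        _ ≤ 2 * R * (1 / (4 * R)) := by
            exact mul_le_mul_of_nonneg_left hθ (by positivity)
        _ = 1 / 2 := by field_simp; try ring
    have h1 := step 0 θ hsmall v
    have h2 := hL0 v
    linarith
  intro θ
  constructor
  · -- part 1
    intro hθ v
    have h := base θ hθ v
    have hcov := sq_lnorm K θ v
    have h2 : ((1 / 4) * a * ‖v‖) ^ 2 ≤ (lnorm K θ v) ^ 2 := by
      have h0 : (0:ℝ) ≤ (1 / 4) * a * ‖v‖ := by positivity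
      exact pow_le_pow_left₀ h0 h 2
    rw [hcov] at h2
    calc (1 / 16) * a ^ 2 * ‖v‖ ^ 2 = ((1 / 4) * a * ‖v‖) ^ 2 := by ring
      _ ≤ covForm (boltzmann K θ) v v := h2
  · -- part 2
    intro hθ v
    have hθpos : 0 < ‖θ‖ := lt_trans (by positivity) hθ
    set C : ℝ := 4 * R * ‖θ‖ with hC
    have hCpos : 0 < C := by positivity
    have hC1 : 1 < C := by
      have := (div_lt_iff₀ (by positivity : (0:ℝ) < 4 * R)).mp hθ
      rw [hC]; nlinarith
    set η : EuclideanSpace ℝ (Fin n) := C⁻¹ • θ with hη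
    have hθη : θ = C • η := by
      rw [hη, smul_smul, mul_inv_cancel₀ (ne_of_gt hCpos), one_smul]
    have hηnorm : ‖η‖ = 1 / (4 * R) := by
      rw [hη, norm_smul, Real.norm_eq_abs, abs_inv, abs_of_pos hCpos, hC]
      field_simp
      try ring
    have hbase := base η (le_of_eq hηnorm)
    clear_value η
    -- √ϑ > 0
    have hLηη : 0 < lnorm K η η := by
      have := hbase η
      have hn : 0 < ‖η‖ := by rw [hηnorm]; positivity
      nlinarith
    have hs0 : 0 < Real.sqrt ϑ := lt_of_lt_of_le hLηη (hLϑ η)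
    set s : ℝ := Real.sqrt ϑ with hsdef
    set δ : ℝ := 1 / (2 * s) with hδdef
    have hδ0 : 0 < δ := by positivity
    have hδs : δ * s = 1 / 2 := by rw [hδdef]; field_simp; try ring
    have hb1 : (1 : ℝ) < 1 + δ := by linarith
    -- chain of steps
    have chain : ∀ m : ℕ, ∀ w, (1 / 2 : ℝ) ^ m * lnorm K η w ≤
        lnorm K ((1 + δ) ^ m • η) w := by
      intro m
      induction m with
      | zero => intro w; simp
      | succ k ih =>
        intro w
        have hpow : (0 : ℝ) < (1 + δ) ^ k := by positivity
        have hdiff : ((1 + δ) ^ (k + 1) • η) - ((1 + δ) ^ k • η)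
            = δ • ((1 + δ) ^ k • η) := by
          rw [smul_smul, ← sub_smul]
          congr 1
          ring
        have hstep : lnorm K ((1 + δ) ^ k • η)
            (((1 + δ) ^ (k + 1) • η) - ((1 + δ) ^ k • η)) ≤ 1 / 2 := by
          rw [hdiff, lnorm_smul, abs_of_pos hδ0]
          calc δ * lnorm K ((1 + δ) ^ k • η) ((1 + δ) ^ k • η)
              ≤ δ * s := mul_le_mul_of_nonneg_left (hLϑ _) hδ0.le
            _ = 1 / 2 := hδs
        have h1 := step _ _ hstep w
        have h2 := ih w
        calc (1 / 2 : ℝ) ^ (k + 1) * lnorm K η w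
            = (1 / 2) * ((1 / 2 : ℝ) ^ k * lnorm K η w) := by ring
          _ ≤ (1 / 2) * lnorm K ((1 + δ) ^ k • η) w := by linarith
          _ ≤ lnorm K ((1 + δ) ^ (k + 1) • η) w := h1
    -- find minimal M with C ≤ (1+δ)^M
    have hex : ∃ m : ℕ, C ≤ (1 + δ) ^ m := by
      obtain ⟨m, hm⟩ := pow_unbounded_of_one_lt C hb1
      exact ⟨m, hm.le⟩
    have hM := Nat.find_spec hex
    have hM0 : Nat.find hex ≠ 0 := by
      intro h
      rw [h, pow_zero] at hM
      linarith
    obtain ⟨m, hm⟩ : ∃ m, Nat.find hex = m + 1 :=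
      ⟨Nat.find hex - 1, (Nat.succ_pred_eq_of_ne_zero hM0).symm⟩
    rw [hm] at hM
    have hmlt : (1 + δ) ^ m < C := by
      have := Nat.find_min hex (by omega : m < Nat.find hex)
      push_neg at this
      exact this
    have hpm : (0 : ℝ) < (1 + δ) ^ m := by positivity
    -- last step from (1+δ)^m • η to θ = C • η
    set lam : ℝ := (C - (1 + δ) ^ m) / (1 + δ) ^ m with hlam
    have hlam0 : 0 ≤ lam := by
      apply div_nonneg (by linarith) hpm.le
    have hlamδ : lam ≤ δ := by
      rw [hlam, div_le_iff₀ hpm]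
      have : C ≤ (1 + δ) * (1 + δ) ^ m := by
        calc C ≤ (1 + δ) ^ (m + 1) := hM
          _ = (1 + δ) * (1 + δ) ^ m := by ring
      nlinarith
    have hlmeq : lam * (1 + δ) ^ m = C - (1 + δ) ^ m := by
      rw [hlam]; field_simp
    have hdiff : θ - (1 + δ) ^ m • η = lam • ((1 + δ) ^ m • η) := by
      rw [hθη, smul_smul lam, hlmeq, ← sub_smul]
    have hlast : lnorm K ((1 + δ) ^ m • η) (θ - (1 + δ) ^ m • η) ≤ 1 / 2 := by
      rw [hdiff, lnorm_smul, abs_of_nonneg hlam0]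
      calc lam * lnorm K ((1 + δ) ^ m • η) ((1 + δ) ^ m • η)
          ≤ δ * s := by
            apply mul_le_mul hlamδ (hLϑ _) (lnorm_nonneg _ _ _) hδ0.le
        _ = 1 / 2 := hδs
    have hfin : (1 / 2 : ℝ) ^ (m + 1) * lnorm K η v ≤ lnorm K θ v := by
      have h1 := step _ _ hlast v
      have h2 := chain m v
      calc (1 / 2 : ℝ) ^ (m + 1) * lnorm K η v
          = (1 / 2) * ((1 / 2 : ℝ) ^ m * lnorm K η v) := by ring
        _ ≤ (1 / 2) * lnorm K ((1 + δ) ^ m • η) v := by linarith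
        _ ≤ lnorm K θ v := h1
    -- combine with base bound at η
    have hLθ : (1 / 2 : ℝ) ^ (m + 1) * ((1 / 4) * a * ‖v‖) ≤ lnorm K θ v := by
      have := hbase v
      have hp : (0:ℝ) ≤ (1 / 2 : ℝ) ^ (m + 1) := by positivity
      calc (1 / 2 : ℝ) ^ (m + 1) * ((1 / 4) * a * ‖v‖)
          ≤ (1 / 2 : ℝ) ^ (m + 1) * lnorm K η v :=
            mul_le_mul_of_nonneg_left this hp
        _ ≤ lnorm K θ v := hfin
    -- exponent comparison: (1/C)^(4s+2) ≤ (1/4)^m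
    have hecmp : (1 / C : ℝ) ^ ((4 : ℝ) * s + 2) ≤ (1 / 4 : ℝ) ^ m := by
      have he0 : (0:ℝ) ≤ (4 : ℝ) * s + 2 := by positivity
      have h4 : (4 : ℝ) ≤ (1 + δ) ^ ((4 : ℝ) * s + 2) := by
        have := four_le_rpow_aux s hs0
        rw [hδdef]
        exact this
      have hCe : (4 : ℝ) ^ m ≤ C ^ ((4 : ℝ) * s + 2) := by
        calc (4 : ℝ) ^ m ≤ ((1 + δ) ^ ((4 : ℝ) * s + 2)) ^ m := by
              exact pow_le_pow_left₀ (by norm_num) h4 m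
          _ = ((1 + δ) ^ (m : ℕ)) ^ ((4 : ℝ) * s + 2) := by
              rw [← Real.rpow_natCast ((1 + δ) ^ ((4 : ℝ) * s + 2)) m,
                ← Real.rpow_mul (by linarith : (0:ℝ) ≤ 1 + δ),
                ← Real.rpow_natCast (1 + δ) m,
                ← Real.rpow_mul (by linarith : (0:ℝ) ≤ 1 + δ), mul_comm]
          _ ≤ C ^ ((4 : ℝ) * s + 2) := by
              apply Real.rpow_le_rpow hpm.le hmlt.le he0
      have hCepos : (0:ℝ) < C ^ ((4 : ℝ) * s + 2) := Real.rpow_pos_of_pos hCpos _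
      have h4pos : (0:ℝ) < (4 : ℝ) ^ m := by positivity
      have hinv : (C ^ ((4 : ℝ) * s + 2))⁻¹ ≤ ((4 : ℝ) ^ m)⁻¹ :=
        inv_anti₀ h4pos hCe
      calc (1 / C : ℝ) ^ ((4 : ℝ) * s + 2)
          = (C ^ ((4 : ℝ) * s + 2))⁻¹ := by
            rw [one_div, Real.inv_rpow hCpos.le]
        _ ≤ ((4 : ℝ) ^ m)⁻¹ := hinv
        _ = (1 / 4 : ℝ) ^ m := by
            rw [← inv_pow]; norm_num
      -- done
    -- final squaring and combination
    have hcov := sq_lnorm K θ v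
    have hsq : ((1 / 2 : ℝ) ^ (m + 1) * ((1 / 4) * a * ‖v‖)) ^ 2
        ≤ covForm (boltzmann K θ) v v := by
      rw [← hcov]
      have h0 : (0:ℝ) ≤ (1 / 2 : ℝ) ^ (m + 1) * ((1 / 4) * a * ‖v‖) := by positivity
      exact pow_le_pow_left₀ h0 hLθ 2
    have h12 : ((1 / 2 : ℝ) ^ (m + 1)) ^ 2 = (1 / 4 : ℝ) ^ (m + 1) := by
      rw [← pow_mul, mul_comm (m + 1) 2, pow_mul]
      norm_num
    have hID : ((1 / 2 : ℝ) ^ (m + 1) * ((1 / 4) * a * ‖v‖)) ^ 2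
        = (1 / 64) * (1 / 4 : ℝ) ^ m * a ^ 2 * ‖v‖ ^ 2 := by
      calc ((1 / 2 : ℝ) ^ (m + 1) * ((1 / 4) * a * ‖v‖)) ^ 2
          = ((1 / 2 : ℝ) ^ (m + 1)) ^ 2 * ((1 / 4) * a * ‖v‖) ^ 2 := by ring
        _ = (1 / 4 : ℝ) ^ (m + 1) * ((1 / 4) * a * ‖v‖) ^ 2 := by rw [h12]
        _ = (1 / 64) * (1 / 4 : ℝ) ^ m * a ^ 2 * ‖v‖ ^ 2 := by rw [pow_succ]; ring
    have hv2 : (0:ℝ) ≤ a ^ 2 * ‖v‖ ^ 2 := by positivity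
    calc (1 / 64) * (1 / C : ℝ) ^ ((4 : ℝ) * s + 2) * a ^ 2 * ‖v‖ ^ 2
        ≤ (1 / 64) * (1 / 4 : ℝ) ^ m * a ^ 2 * ‖v‖ ^ 2 := by gcongr
      _ = ((1 / 2 : ℝ) ^ (m + 1) * ((1 / 4) * a * ‖v‖)) ^ 2 := hID.symm
      _ ≤ covForm (boltzmann K θ) v v := hsq
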